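/- For any Kripke model M and any agent-alternating unraveling N of M, the canonically defined family of relations {P_a^N}_{a ∈ A∪{alt}}, given by u P_a^N s iff the last element of the sequence s is ⟨a, u⟩, is an agent-alternating bisimulation family between M and N; consequently, for every world w of M, the pointed models M,w and N,⟨⟨alt,w⟩⟩ satisfy the same L_alt formulas. -/

import Mathlib

/-- Formulas of the multi-agent modal language: p | ¬φ | (φ ∧ φ) | □_a φ. -/
inductive Fm (A : Type) : Type
  | atom : ℕ → Fm A
  | neg : Fm A → Fm A
  | and : Fm A → Fm A → Fm A
  | box : A → Fm A → Fm A

namespace Fm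
def imp {A : Type} (φ ψ : Fm A) : Fm A := .neg (.and φ (.neg ψ))
def or {A : Type} (φ ψ : Fm A) : Fm A := .neg (.and (.neg φ) (.neg ψ))
def dia {A : Type} (a : A) (φ : Fm A) : Fm A := .neg (.box a (.neg φ))
end Fm

/-- Kripke models with agent set `A` and world type `W`. -/
structure Kripke (A W : Type) where
  R : A → W → W → Prop
  V : ℕ → W → Prop

/-- Satisfaction. -/
def Sat {A W : Type} (M : Kripke A W) : W → Fm A → Prop
  | w, .atom n => M.V n w
  | w, .neg φ => ¬ Sat M w φ
  | w, .and φ ψ => Sat M w φ ∧ Sat M w ψ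
  | w, .box a φ => ∀ v, M.R a w v → Sat M v φ

/-- The fragments L_{-a}: φ ::= p | □_x ψ (x ≠ a, ψ ∈ L_{-x}) | ¬φ | (φ ∧ φ). -/
inductive LMinus {A : Type} : A → Fm A → Prop
  | atom (a : A) (n : ℕ) : LMinus a (.atom n)
  | box {a x : A} {ψ : Fm A} : x ≠ a → LMinus x ψ → LMinus a (.box x ψ)
  | neg {a : A} {φ : Fm A} : LMinus a φ → LMinus a (.neg φ)
  | and {a : A} {φ ψ : Fm A} : LMinus a φ → LMinus a ψ → LMinus a (.and φ ψ)

/-- The agent-alternating fragment L_alt. -/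
inductive LAlt {A : Type} : Fm A → Prop
  | atom (n : ℕ) : LAlt (.atom n)
  | chi {φ : Fm A} (a : A) : LMinus a φ → LAlt φ
  | neg {φ : Fm A} : LAlt φ → LAlt (.neg φ)
  | and {φ ψ : Fm A} : LAlt φ → LAlt ψ → LAlt (.and φ ψ)

/-- The fragments L_X for X ⊆ A: φ ::= p | □_x ψ (x ∈ X, ψ ∈ L_{X\{x}}) | ¬φ | (φ ∧ φ). -/
inductive LX {A : Type} : Set A → Fm A → Prop
  | atom (X : Set A) (n : ℕ) : LX X (.atom n)
  | box {X : Set A} {x : A} {ψ : Fm A} : x ∈ X → LX (X \ {x}) ψ → LX X (.box x ψ)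
  | neg {X : Set A} {φ : Fm A} : LX X φ → LX X (.neg φ)
  | and {X : Set A} {φ ψ : Fm A} : LX X φ → LX X ψ → LX X (.and φ ψ)

/-- Immediate subformula relation. -/
inductive ISub {A : Type} : Fm A → Fm A → Prop
  | neg (φ : Fm A) : ISub φ (.neg φ)
  | andL (φ ψ : Fm A) : ISub φ (.and φ ψ)
  | andR (φ ψ : Fm A) : ISub ψ (.and φ ψ)
  | box (a : A) (φ : Fm A) : ISub φ (.box a φ)

/-- An occurrence type of φ: a nonempty sequence of formulas, each an immediate
subformula of the next, ending in φ. -/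
def IsOcc {A : Type} (l : List (Fm A)) (φ : Fm A) : Prop :=
  l ≠ [] ∧ l.getLast? = some φ ∧ List.Chain' ISub l

/-- A □_a-occurrence of φ. -/
def IsBoxOcc {A : Type} (a : A) (l : List (Fm A)) (φ : Fm A) : Prop :=
  IsOcc l φ ∧ ∃ β, l.head? = some (Fm.box a β)

/-- O ≤ O' iff O' is a suffix of O (prefix-extension order on occurrences). -/
def OccLe {A : Type} (O O' : List (Fm A)) : Prop := O' <:+ O

/-- φ is agent-alternating: between any two nested □_a-occurrences there is a
□_b-occurrence for some b ≠ a. -/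
def AgentAlternating {A : Type} (φ : Fm A) : Prop :=
  ∀ (a : A) (O O' : List (Fm A)), IsBoxOcc a O φ → IsBoxOcc a O' φ → O ≠ O' → OccLe O O' →
    ∃ b : A, b ≠ a ∧ ∃ O'' : List (Fm A), IsBoxOcc b O'' φ ∧ OccLe O O'' ∧ OccLe O'' O'

/-- φ is agent-nonrepeating: no □_a-occurrence lies below another □_a-occurrence. -/
def AgentNonrepeating {A : Type} (φ : Fm A) : Prop :=
  ∀ (a : A) (O O' : List (Fm A)), IsBoxOcc a O φ → IsBoxOcc a O' φ → O ≠ O' → ¬ OccLe O O'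

/-- Boolean evaluation treating atoms and boxed formulas as atomic. -/
def evalP {A : Type} (v : Fm A → Bool) : Fm A → Bool
  | .neg φ => ! evalP v φ
  | .and φ ψ => evalP v φ && evalP v ψ
  | φ => v φ

/-- Propositional tautologies (in the signature ¬, ∧, with boxed formulas atomic). -/
def Taut {A : Type} (φ : Fm A) : Prop := ∀ v : Fm A → Bool, evalP v φ = true

/-- Provability in the smallest normal modal logic containing the axioms `Ax`. -/
inductive Prv {A : Type} (Ax : Fm A → Prop) : Fm A → Prop
  | taut {φ : Fm A} : Taut φ → Prv Ax φ
  | ax {φ : Fm A} : Ax φ → Prv Ax φ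
  | k (a : A) (φ ψ : Fm A) :
      Prv Ax (Fm.imp (.box a (Fm.imp φ ψ)) (Fm.imp (.box a φ) (.box a ψ)))
  | mp {φ ψ : Fm A} : Prv Ax (Fm.imp φ ψ) → Prv Ax φ → Prv Ax ψ
  | nec {φ : Fm A} (a : A) : Prv Ax φ → Prv Ax (.box a φ)

def AxNone {A : Type} : Fm A → Prop := fun _ => False
def AxT {A : Type} : Fm A → Prop := fun χ => ∃ (a : A) (φ : Fm A), χ = Fm.imp (.box a φ) φ
def Ax4 {A : Type} : Fm A → Prop := fun χ => ∃ (a : A) (φ : Fm A), χ = Fm.imp (.box a φ) (.box a (.box a φ))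
def Ax5 {A : Type} : Fm A → Prop := fun χ => ∃ (a : A) (φ : Fm A), χ = Fm.imp (.neg (.box a φ)) (.box a (.neg (.box a φ)))
def AxB {A : Type} : Fm A → Prop := fun χ => ∃ (a : A) (φ : Fm A), χ = Fm.imp φ (.box a (Fm.dia a φ))
def AxD {A : Type} : Fm A → Prop := fun χ => ∃ (a : A) (φ : Fm A), χ = Fm.imp (.box a φ) (Fm.dia a φ)

def Ser {W : Type} (R : W → W → Prop) : Prop := ∀ u, ∃ v, R u v
def Eucl {W : Type} (R : W → W → Prop) : Prop := ∀ u v w, R u v → R u w → R v w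

/-- Agent-alternating bisimulation family (`none` plays the role of `alt`). -/
def IsAAFamily {A W1 W2 : Type} (M : Kripke A W1) (N : Kripke A W2)
    (f : Option A → W1 → W2 → Prop) : Prop :=
  ∀ (o : Option A) (u : W1) (v : W2), f o u v →
    (∀ n, M.V n u ↔ N.V n v) ∧
    (∀ b : A, o ≠ some b →
      (∀ u', M.R b u u' → ∃ v', N.R b v v' ∧ f (some b) u' v') ∧
      (∀ v', N.R b v v' → ∃ u', M.R b u u' ∧ f (some b) u' v'))

/-- Agent-nonrepeating bisimulation family. -/
def IsNRFamily {A W1 W2 : Type} (M : Kripke A W1) (N : Kripke A W2)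
    (f : Set A → W1 → W2 → Prop) : Prop :=
  ∀ (X : Set A) (u : W1) (v : W2), f X u v →
    (∀ n, M.V n u ↔ N.V n v) ∧
    (∀ x ∈ X,
      (∀ u', M.R x u u' → ∃ v', N.R x v v' ∧ f (X \ {x}) u' v') ∧
      (∀ v', N.R x v v' → ∃ u', M.R x u u' ∧ f (X \ {x}) u' v'))

/-- One step in an agent-alternating sequence. -/
def Step {A W : Type} (M : Kripke A W) : (Option A × W) → (Option A × W) → Prop :=
  fun x y => x.1 ≠ y.1 ∧ ∃ b : A, y.1 = some b ∧ M.R b x.2 y.2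

/-- Valid worlds of an agent-alternating unraveling. -/
def ValidSeq {A W : Type} (M : Kripke A W) (s : List (Option A × W)) : Prop :=
  s ≠ [] ∧ (∃ w, s.head? = some (none, w)) ∧ (∀ x ∈ s.tail, x.1 ≠ none) ∧
    List.Chain' (Step M) s

def UWorld {A W : Type} (M : Kripke A W) : Type := {s : List (Option A × W) // ValidSeq M s}

def lastEntry {A W : Type} {M : Kripke A W} (s : UWorld M) : Option A × W :=
  s.val.getLast s.prop.1

/-- N is an agent-alternating unraveling of M. -/
def IsAAUnraveling {A W : Type} (M : Kripke A W) (N : Kripke A (UWorld M)) : Prop :=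
  (∀ (b : A) (s : UWorld M), (lastEntry s).1 ≠ some b →
    ∀ t : UWorld M, N.R b s t ↔ ∃ w', M.R b (lastEntry s).2 w' ∧ t.val = s.val ++ [(some b, w')])
  ∧ (∀ n (s : UWorld M), N.V n s ↔ M.V n (lastEntry s).2)

/-- The canonical relation family between M and any of its agent-alternating unravelings. -/
def PFam {A W : Type} (M : Kripke A W) : Option A → W → UWorld M → Prop :=
  fun o u s => lastEntry s = (o, u)

/-- Finite agent-alternating bisimulation relations: `BisimN M N n (some a)` is ⇆_{-a}^n,
`BisimN M N n none` is ⇆_alt^n. -/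
def BisimN {A W1 W2 : Type} (M : Kripke A W1) (N : Kripke A W2) :
    ℕ → Option A → W1 → W2 → Prop
  | 0, _, u, v => ∀ n, M.V n u ↔ N.V n v
  | (n+1), o, u, v => (∀ m, M.V m u ↔ N.V m v) ∧
      ∀ b : A, o ≠ some b →
        (∀ u', M.R b u u' → ∃ v', N.R b v v' ∧ BisimN M N n (some b) u' v') ∧
        (∀ v', N.R b v v' → ∃ u', M.R b u u' ∧ BisimN M N n (some b) u' v')

/-- Standard n-bisimilarity. -/
def StdBisimN {A W1 W2 : Type} (M : Kripke A W1) (N : Kripke A W2) :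
    ℕ → W1 → W2 → Prop
  | 0, u, v => ∀ n, M.V n u ↔ N.V n v
  | (n+1), u, v => (∀ m, M.V m u ↔ N.V m v) ∧
      ∀ b : A,
        (∀ u', M.R b u u' → ∃ v', N.R b v v' ∧ StdBisimN M N n u' v') ∧
        (∀ v', N.R b v v' → ∃ u', M.R b u u' ∧ StdBisimN M N n u' v')


lemma agree_aux {A W1 W2 : Type} {M : Kripke A W1} {N : Kripke A W2}
    {f : Option A → W1 → W2 → Prop} (hf : IsAAFamily M N f) :
    ∀ {a : A} {φ : Fm A}, LMinus a φ → ∀ (o : Option A) (u : W1) (v : W2), f o u v →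
      (o = none ∨ o = some a) → (Sat M u φ ↔ Sat N v φ) := by
  intro a φ h
  induction h with
  | atom a n =>
    intro o u v hfv _
    exact (hf o u v hfv).1 n
  | @box a x ψ hx _ ih =>
    intro o u v hfv ho
    have hne : o ≠ some x := by
      rcases ho with h | h <;> simp [h]
      exact fun h' => hx h'.symm
    obtain ⟨zig, zag⟩ := (hf o u v hfv).2 x hne
    constructor
    · intro h v' hv'
      obtain ⟨u', hu', hf'⟩ := zag v' hv'
      exact (ih (some x) u' v' hf' (Or.inr rfl)).1 (h u' hu')
    · intro h u' hu'
      obtain ⟨v', hv', hf'⟩ := zig u' hu'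
      exact (ih (some x) u' v' hf' (Or.inr rfl)).2 (h v' hv')
  | neg _ ih =>
    intro o u v hfv ho
    exact not_congr (ih o u v hfv ho)
  | and _ _ ih1 ih2 =>
    intro o u v hfv ho
    exact and_congr (ih1 o u v hfv ho) (ih2 o u v hfv ho)

lemma agree_alt {A W1 W2 : Type} {M : Kripke A W1} {N : Kripke A W2}
    {f : Option A → W1 → W2 → Prop} (hf : IsAAFamily M N f)
    {u : W1} {v : W2} (hfv : f none u v) :
    ∀ {φ : Fm A}, LAlt φ → (Sat M u φ ↔ Sat N v φ) := by
  intro φ h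
  induction h with
  | atom n => exact (hf none u v hfv).1 n
  | chi a h => exact agree_aux hf h none u v hfv (Or.inl rfl)
  | neg _ ih => exact not_congr ih
  | and _ _ ih1 ih2 => exact and_congr ih1 ih2

/-- the canonical family is an agent-alternating bisimulation family between M
and any of its agent-alternating unravelings; hence roots agree with M on L_alt. -/
theorem stmt2 {A W : Type} (hA : ∃ a b : A, a ≠ b)
    (M : Kripke A W) (N : Kripke A (UWorld M)) (hN : IsAAUnraveling M N) :
    IsAAFamily M N (PFam M) ∧
    ∀ w : W, ∃ s : UWorld M, s.val = [(none, w)] ∧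
      ∀ φ : Fm A, LAlt φ → (Sat M w φ ↔ Sat N s φ) := by
  have lastE : ∀ (t : UWorld M) (x : Option A × W) (l : List (Option A × W)),
      t.val = l ++ [x] → lastEntry t = x := by
    intro t x l h
    unfold lastEntry
    have h1 := List.getLast?_eq_getLast t.prop.1
    have h2 : t.val.getLast? = some x := by rw [h]; exact List.getLast?_concat
    exact Option.some_inj.1 (h1.symm.trans h2)
  have hfam : IsAAFamily M N (PFam M) := by
    intro o u s hs
    constructor
    · intro n
      rw [hN.2 n s, hs]
    · intro b hb
      have hlast : (lastEntry s).1 ≠ some b := by rw [hs]; exact hb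
      have hne := s.prop.1
      constructor
      · intro u' hu'
        have hval : ValidSeq M (s.val ++ [(some b, u')]) := by
          obtain ⟨hne', ⟨w0, hw0⟩, htail, hchain⟩ := s.prop
          refine ⟨by simp, ⟨w0, ?_⟩, ?_, ?_⟩
          · rw [List.head?_append_of_ne_nil _ hne']; exact hw0
          · intro x hx
            rw [List.tail_append_singleton_of_ne_nil hne'] at hx
            simp at hx
            rcases hx with hx | hx
            · exact htail x hx
            · simp [hx]
          · show List.IsChain _ _; rw [List.isChain_append]
            refine ⟨hchain, List.isChain_singleton _, ?_⟩
            intro x hx y hy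
            simp at hy
            have hxl : x = lastEntry s := by
              rw [List.getLast?_eq_getLast hne', Option.mem_some_iff] at hx
              exact hx.symm
            subst hy hxl
            exact ⟨fun h => hlast h, b, rfl, by rw [hs]; exact hu'⟩
        refine ⟨⟨s.val ++ [(some b, u')], hval⟩, ?_, ?_⟩
        · rw [(hN.1 b s hlast ⟨_, hval⟩)]
          exact ⟨u', by rw [hs]; exact hu', rfl⟩
        · exact lastE _ _ _ rfl
      · intro t ht
        rw [hN.1 b s hlast t] at ht
        obtain ⟨w', hw', htval⟩ := ht
        exact ⟨w', by rw [hs] at hw'; exact hw', lastE t _ _ htval⟩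
  refine ⟨hfam, ?_⟩
  intro w
  have hval : ValidSeq M [(none, w)] := ⟨by simp, ⟨w, rfl⟩, by simp, List.isChain_singleton _⟩
  refine ⟨⟨[(none, w)], hval⟩, rfl, ?_⟩
  intro φ hφ
  have hroot : PFam M none w ⟨[(none, w)], hval⟩ := by
    show lastEntry _ = _
    unfold lastEntry
    simp
  exact agree_alt hfam hroot hφ
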